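/- For a minimal (controllable and observable) representation (A, B, C) with A an MRMT matrix (whose submatrix Ã is diagonal with entries λᵢ = -d₁ᵢ/Vᵢ), the diagonal entries of Ã are pairwise distinct; equivalently, if two immobile zones have equal ratios d₁ᵢ/Vᵢ = d₁ⱼ/Vⱼ, the representation is not minimal (the system is input-output equivalent to one of dimension n−1 obtained by merging the two zones). -/

import Mathlib

open Matrix

/-- for an MRMT system, if two immobile zones have equal ratios
d₁ᵢ/Vᵢ = d₁ⱼ/Vⱼ then the representation is not minimal: the system is
input-output equivalent (same Markov parameters C A^k B) to a representation of
dimension n−1. Equivalently, a minimal MRMT representation has pairwise distinct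
diagonal entries of Ã. -/
theorem mrmt_stmt19 {n : ℕ} (Q : ℝ) (hQ : 0 < Q)
    (Vv : Fin (n + 1) → ℝ) (hV : ∀ i, 0 < Vv i)
    (d : Fin n → ℝ) (hd : ∀ i, 0 < d i)
    (A : Matrix (Fin (n + 1)) (Fin (n + 1)) ℝ)
    (hA00 : A 0 0 = -(Q / Vv 0) - ∑ i, d i / Vv 0)
    (hA0i : ∀ i : Fin n, A 0 i.succ = d i / Vv 0)
    (hAi0 : ∀ i : Fin n, A i.succ 0 = d i / Vv i.succ)
    (hAij : ∀ i j : Fin n, A i.succ j.succ = if i = j then -(d i / Vv i.succ) else 0)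
    (i j : Fin n) (hij : i ≠ j)
    (heq : d i / Vv i.succ = d j / Vv j.succ) :
    ∃ (A' : Matrix (Fin n) (Fin n) ℝ) (B' C' : Fin n → ℝ),
      ∀ k : ℕ,
        dotProduct (Pi.single (0 : Fin (n + 1)) (1 : ℝ))
            ((A ^ k) *ᵥ Pi.single (0 : Fin (n + 1)) (1 : ℝ)) =
          dotProduct C' ((A' ^ k) *ᵥ B') := by
  classical
  set r : Fin (n + 1) → Fin n :=
    fun p => Fin.cases j (fun q => if q = j then i else q) p with hrdef
  set A' : Matrix (Fin n) (Fin n) ℝ := Matrix.of (fun l k =>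
    if k = j then (if l = j then A 0 0 else d l / Vv l.succ)
    else if l = j then (if k = i then (d i + d j) / Vv 0 else d k / Vv 0)
    else if l = k then -(d k / Vv k.succ) else 0) with hA'def
  set T : Matrix (Fin (n + 1)) (Fin n) ℝ :=
    Matrix.of (fun p l => if l = r p then (1 : ℝ) else 0) with hTdef
  have hr0 : r 0 = j := rfl
  have hrs : ∀ q : Fin n, r q.succ = if q = j then i else q := fun q => rfl
  have hAT : A * T = T * A' := by
    ext p k
    have hrhs : (T * A') p k = A' (r p) k := by
      simp [Matrix.mul_apply, hTdef, ite_mul, Finset.sum_ite_eq']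
    have hlhs : (A * T) p k =
        (if k = j then A p 0 else 0) + ((if k = i then A p j.succ else 0)
          + (if k = j then 0 else A p k.succ)) := by
      rw [Matrix.mul_apply, Fin.sum_univ_succ]
      have h0 : A p 0 * T 0 k = if k = j then A p 0 else 0 := by
        simp only [hTdef, Matrix.of_apply, hr0]
        split_ifs <;> ring
      have hs : ∀ q : Fin n, A p q.succ * T q.succ k =
          (if k = i then (if q = j then A p j.succ else 0) else 0)
          + (if k = j then 0 else (if q = k then A p k.succ else 0)) := by
        intro q
        simp only [hTdef, Matrix.of_apply, hrs]
        by_cases hq : q = j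
        · rw [if_pos hq]
          by_cases hk1 : k = i
          · have hkj : ¬ k = j := by rw [hk1]; exact hij
            have hqk : ¬ q = k := by rw [hq, hk1]; exact fun h => hij h.symm
            rw [if_pos hk1, if_pos hk1, if_pos hq, if_neg hkj, if_neg hqk, hq]; ring
          · rw [if_neg hk1, if_neg hk1]
            by_cases hkj : k = j
            · rw [if_pos hkj]; ring
            · have hqk : ¬ q = k := by rw [hq]; exact fun h => hkj h.symm
              rw [if_neg hkj, if_neg hqk]; ring
        · rw [if_neg hq, if_neg hq, ite_self]
          by_cases hk : k = q
          · have hkj' : ¬ k = j := fun h => hq (by rw [← hk]; exact h)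
            rw [if_pos hk, if_neg hkj', if_pos hk.symm, hk]; ring
          · have hqk : ¬ q = k := fun h => hk h.symm
            rw [if_neg hk, if_neg hqk]
            split_ifs <;> ring
      rw [h0, Finset.sum_congr rfl (fun q _ => hs q), Finset.sum_add_distrib]
      congr 1
      congr 1
      · by_cases hk : k = i <;> simp [hk]
      · by_cases hk : k = j <;> simp [hk, Finset.sum_ite_eq']
    rw [hrhs, hlhs]
    refine Fin.cases ?_ (fun q => ?_) p
    · rw [hr0, hA0i, hA0i]
      simp only [hA'def, Matrix.of_apply]
      split_ifs <;> first
        | ring1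
        | (rw [‹k = i›]; ring1)
        | (rw [‹k = i›, heq]; ring1)
        | (rw [heq]; ring1)
        | (rw [← heq]; ring1)
        | (exact absurd (‹k = i›.symm.trans ‹k = j›) hij)
        | (exact absurd (‹k = i›.symm.trans ‹k = q›) hij)
        | (exact absurd ‹q = k›.symm ‹¬k = q›)
        | (exact absurd ‹k = i›.symm ‹¬i = k›)
        | (exact absurd ‹i = k›.symm ‹¬k = i›)
        | (exact absurd ‹q = k›.symm ‹¬k = q›)
        | (rw [‹i = k›] at heq; rw [heq]; ring1)
        | (rw [← ‹i = k›]; ring1)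
        | (rw [‹q = k›]; ring1)
        | (rw [← ‹q = k›]; ring1)
        | (rw [← ‹q = k›, ‹k = i›]; ring1)
    · rw [hrs q, hAi0, hAij, hAij]
      by_cases hq : q = j
      · subst hq
        rw [if_pos rfl]
        simp only [hA'def, Matrix.of_apply]
        split_ifs <;> first
        | ring1
        | (rw [‹k = i›]; ring1)
        | (rw [‹k = i›, heq]; ring1)
        | (rw [heq]; ring1)
        | (rw [← heq]; ring1)
        | (exact absurd (‹k = i›.symm.trans ‹k = j›) hij)
        | (exact absurd (‹k = i›.symm.trans ‹k = q›) hij)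
        | (exact absurd ‹q = k›.symm ‹¬k = q›)
        | (exact absurd ‹k = i›.symm ‹¬i = k›)
        | (exact absurd ‹i = k›.symm ‹¬k = i›)
        | (exact absurd ‹q = k›.symm ‹¬k = q›)
        | (rw [‹i = k›] at heq; rw [heq]; ring1)
        | (rw [← ‹i = k›]; ring1)
        | (rw [‹q = k›]; ring1)
        | (rw [← ‹q = k›]; ring1)
        | (rw [← ‹q = k›, ‹k = i›]; ring1)
      · rw [if_neg hq]
        simp only [hA'def, Matrix.of_apply]
        split_ifs <;> first
        | ring1
        | (rw [‹k = i›]; ring1)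
        | (rw [‹k = i›, heq]; ring1)
        | (rw [heq]; ring1)
        | (rw [← heq]; ring1)
        | (exact absurd (‹k = i›.symm.trans ‹k = j›) hij)
        | (exact absurd (‹k = i›.symm.trans ‹k = q›) hij)
        | (exact absurd ‹q = k›.symm ‹¬k = q›)
        | (exact absurd ‹k = i›.symm ‹¬i = k›)
        | (exact absurd ‹i = k›.symm ‹¬k = i›)
        | (exact absurd ‹q = k›.symm ‹¬k = q›)
        | (rw [‹i = k›] at heq; rw [heq]; ring1)
        | (rw [← ‹i = k›]; ring1)
        | (rw [‹q = k›]; ring1)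
        | (rw [← ‹q = k›]; ring1)
        | (rw [← ‹q = k›, ‹k = i›]; ring1)
  refine ⟨A', Pi.single j 1, Pi.single j 1, fun k => ?_⟩
  have key : ∀ m : ℕ, (A ^ m) *ᵥ Pi.single (0 : Fin (n + 1)) (1 : ℝ) =
      T *ᵥ ((A' ^ m) *ᵥ Pi.single j 1) := by
    intro m
    induction m with
    | zero =>
      simp only [pow_zero, Matrix.one_mulVec]
      ext p
      simp only [Matrix.mulVec, dotProduct, hTdef, Matrix.of_apply]
      rw [Finset.sum_eq_single j]
      · refine Fin.cases ?_ (fun q => ?_) p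
        · simp [hr0]
        · rw [hrs q]
          have h1 : (q.succ : Fin (n + 1)) ≠ 0 := Fin.succ_ne_zero q
          by_cases hq : q = j
          · simp [hq, Pi.single_eq_of_ne h1, hij.symm]
          · simp [hq, Pi.single_eq_of_ne h1, Ne.symm hq]
      · intro b _ hb
        simp [Pi.single_apply, hb]
      · simp
    | succ m ih =>
      rw [pow_succ', pow_succ', ← Matrix.mulVec_mulVec, ← Matrix.mulVec_mulVec, ih,
        Matrix.mulVec_mulVec, hAT, ← Matrix.mulVec_mulVec]
  rw [key]
  simp only [dotProduct, Matrix.mulVec, hTdef, Matrix.of_apply]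
  rw [Finset.sum_eq_single (0 : Fin (n + 1))]
  · simp [hr0, dotProduct, Pi.single_apply, ite_mul]
  · intro b _ hb
    simp [Pi.single_apply, hb]
  · simp
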